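/- arXiv:0806.3706 — 4 statements merged into one kernel-verified Lean document; each statement's English description precedes it below -/
import Mathlib

section
/- Let M = (M_t)_{t≥0} be a continuous local martingale with M_0 = 0 and quadratic variation ⟨M⟩. Suppose that for some α > 0, E[exp(α ⟨M⟩_T)] < ∞. Then for any λ < √(α/2), E[exp(λ |M_T|)] < ∞. -/
open MeasureTheory Real

/-- For a continuous local martingale `M` vanishing at `0`, with quadratic variation `qv`
(characterized through the maximal exponential inequality
`P(sup_{0≤t≤T} |M_t| ≥ δ, ⟨M⟩_T < ρ) ≤ 2 exp(-δ²/(2ρ))`), if `E[exp(α ⟨M⟩_T)] < ∞` for some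
`α > 0`, then `E[exp(λ |M_T|)] < ∞` for any `λ < √(α/2)`. -/
theorem exp_moment_of_exp_qv {Ω : Type*} [MeasurableSpace Ω] (μ : Measure Ω)
    [IsProbabilityMeasure μ] (T : ℝ) (hT : 0 < T) (M qv : ℝ → Ω → ℝ)
    (hM0 : ∀ ω, M 0 ω = 0)
    (hMcont : ∀ ω, Continuous fun t => M t ω)
    (hMmeas : ∀ t, Measurable (M t)) (hqvmeas : Measurable (qv T))
    (hmax : ∀ δ ρ : ℝ, 0 < δ → 0 < ρ →
      μ {ω | (∃ t ∈ Set.Icc (0 : ℝ) T, δ ≤ |M t ω|) ∧ qv T ω < ρ} ≤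
        ENNReal.ofReal (2 * Real.exp (-δ ^ 2 / (2 * ρ))))
    (α : ℝ) (hα : 0 < α)
    (hint : Integrable (fun ω => Real.exp (α * qv T ω)) μ)
    (lam : ℝ) (hlam : lam < Real.sqrt (α / 2)) :
    Integrable (fun ω => Real.exp (lam * |M T ω|)) μ := by
  have hMT : Measurable (M T) := hMmeas T
  have hfmeas : Measurable fun ω => Real.exp (lam * |M T ω|) :=
    (measurable_const.mul hMT.abs).exp
  rcases le_or_gt lam 0 with hl | hl
  · refine (integrable_const (1 : ℝ)).mono' hfmeas.aestronglyMeasurable ?_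
    filter_upwards with ω
    rw [Real.norm_eq_abs, abs_of_pos (Real.exp_pos _)]
    exact Real.exp_le_one_iff.mpr (mul_nonpos_of_nonpos_of_nonneg hl (abs_nonneg _))
  -- now 0 < lam
  set L := Real.sqrt (α / 2) with hLdef
  have hL0 : 0 < L := Real.sqrt_pos.mpr (by positivity)
  have hL2 : L ^ 2 = α / 2 := Real.sq_sqrt (by positivity)
  set C := ∫ ω, Real.exp (α * qv T ω) ∂μ with hCdef
  have hC0 : 0 ≤ C := integral_nonneg fun ω => (Real.exp_pos _).le
  have hlintC : ∫⁻ ω, ENNReal.ofReal (Real.exp (α * qv T ω)) ∂μ = ENNReal.ofReal C :=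
    (ofReal_integral_eq_lintegral_ofReal hint
      (ae_of_all _ fun ω => (Real.exp_pos _).le)).symm
  -- Markov inequality for qv
  have hmarkov : ∀ ρ : ℝ, 0 < ρ →
      μ {ω | ρ ≤ qv T ω} ≤ ENNReal.ofReal (C * Real.exp (-(α * ρ))) := by
    intro ρ hρ
    have hsub : {ω | ρ ≤ qv T ω} ⊆
        {ω | ENNReal.ofReal (Real.exp (α * ρ)) ≤ ENNReal.ofReal (Real.exp (α * qv T ω))} := by
      intro ω hω
      exact ENNReal.ofReal_le_ofReal (Real.exp_le_exp.mpr
        (mul_le_mul_of_nonneg_left hω hα.le))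
    have hmk := mul_meas_ge_le_lintegral₀ (μ := μ)
      (f := fun ω => ENNReal.ofReal (Real.exp (α * qv T ω)))
      (hqvmeas.const_mul α).exp.ennreal_ofReal.aemeasurable
      (ENNReal.ofReal (Real.exp (α * ρ)))
    rw [hlintC] at hmk
    have hne : ENNReal.ofReal (Real.exp (α * ρ)) ≠ 0 := by
      simp [ENNReal.ofReal_eq_zero, not_le, Real.exp_pos]
    have hnetop : ENNReal.ofReal (Real.exp (α * ρ)) ≠ ⊤ := ENNReal.ofReal_ne_top
    calc μ {ω | ρ ≤ qv T ω}
        ≤ μ {ω | ENNReal.ofReal (Real.exp (α * ρ)) ≤ ENNReal.ofReal (Real.exp (α * qv T ω))} :=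
          measure_mono hsub
      _ ≤ ENNReal.ofReal C / ENNReal.ofReal (Real.exp (α * ρ)) := by
          rw [ENNReal.le_div_iff_mul_le (Or.inl hne) (Or.inl hnetop), mul_comm]
          exact hmk
      _ = ENNReal.ofReal (C * Real.exp (-(α * ρ))) := by
          rw [← ENNReal.ofReal_div_of_pos (Real.exp_pos _), Real.exp_neg, div_eq_mul_inv]
  -- tail bound for |M T|
  have htail : ∀ δ : ℝ, 0 < δ →
      μ {ω | δ ≤ |M T ω|} ≤ ENNReal.ofReal ((2 + C) * Real.exp (-(L * δ))) := by
    intro δ hδ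
    set ρ := δ / (2 * L) with hρdef
    have hρ : 0 < ρ := by positivity
    have hsub : {ω | δ ≤ |M T ω|} ⊆
        {ω | (∃ t ∈ Set.Icc (0 : ℝ) T, δ ≤ |M t ω|) ∧ qv T ω < ρ} ∪ {ω | ρ ≤ qv T ω} := by
      intro ω hω
      rcases lt_or_ge (qv T ω) ρ with h | h
      · exact Or.inl ⟨⟨T, ⟨hT.le, le_refl T⟩, hω⟩, h⟩
      · exact Or.inr h
    have e1 : -δ ^ 2 / (2 * ρ) = -(L * δ) := by
      rw [hρdef]
      field_simp
    have e2 : -(α * ρ) = -(L * δ) := by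
      rw [hρdef]
      have : α = 2 * L ^ 2 := by linarith
      rw [this]
      field_simp
    calc μ {ω | δ ≤ |M T ω|}
        ≤ μ ({ω | (∃ t ∈ Set.Icc (0 : ℝ) T, δ ≤ |M t ω|) ∧ qv T ω < ρ} ∪ {ω | ρ ≤ qv T ω}) :=
          measure_mono hsub
      _ ≤ μ {ω | (∃ t ∈ Set.Icc (0 : ℝ) T, δ ≤ |M t ω|) ∧ qv T ω < ρ} + μ {ω | ρ ≤ qv T ω} :=
          measure_union_le _ _
      _ ≤ ENNReal.ofReal (2 * Real.exp (-δ ^ 2 / (2 * ρ)))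
            + ENNReal.ofReal (C * Real.exp (-(α * ρ))) :=
          add_le_add (hmax δ ρ hδ hρ) (hmarkov ρ hρ)
      _ = ENNReal.ofReal ((2 + C) * Real.exp (-(L * δ))) := by
          rw [e1, e2, ← ENNReal.ofReal_add (by positivity) (by positivity)]
          ring_nf
  -- uniform geometric bound for natural n
  have htailn : ∀ n : ℕ,
      μ {ω | (n : ℝ) ≤ |M T ω|} ≤ ENNReal.ofReal ((3 + C) * Real.exp (-(L * n))) := by
    intro n
    rcases Nat.eq_zero_or_pos n with rfl | hn
    · simp only [Nat.cast_zero, mul_zero, neg_zero, Real.exp_zero, mul_one]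
      calc μ _ ≤ 1 := prob_le_one
        _ ≤ ENNReal.ofReal (3 + C) := by
            rw [← ENNReal.ofReal_one]
            exact ENNReal.ofReal_le_ofReal (by linarith)
    · have hn' : (0 : ℝ) < n := by exact_mod_cast hn
      calc μ {ω | (n : ℝ) ≤ |M T ω|}
          ≤ ENNReal.ofReal ((2 + C) * Real.exp (-(L * n))) := htail n hn'
        _ ≤ ENNReal.ofReal ((3 + C) * Real.exp (-(L * n))) :=
            ENNReal.ofReal_le_ofReal (by nlinarith [Real.exp_pos (-(L * (n : ℝ)))])
  -- pointwise bound by a tsum of indicators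
  have hpt : ∀ ω, ENNReal.ofReal (Real.exp (lam * |M T ω|)) ≤
      ∑' n : ℕ, Set.indicator {ω' | (n : ℝ) ≤ |M T ω'|}
        (fun _ => ENNReal.ofReal (Real.exp (lam * (n + 1)))) ω := by
    intro ω
    set m := ⌊|M T ω|⌋₊ with hm
    have h1 : (m : ℝ) ≤ |M T ω| := Nat.floor_le (abs_nonneg _)
    have h2 : |M T ω| < m + 1 := Nat.lt_floor_add_one _
    calc ENNReal.ofReal (Real.exp (lam * |M T ω|))
        ≤ Set.indicator {ω' | (m : ℝ) ≤ |M T ω'|}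
            (fun _ => ENNReal.ofReal (Real.exp (lam * (m + 1)))) ω := by
          have hmem : ω ∈ {ω' | (m : ℝ) ≤ |M T ω'|} := h1
          rw [Set.indicator_of_mem hmem]
          exact ENNReal.ofReal_le_ofReal (Real.exp_le_exp.mpr (by nlinarith))
      _ ≤ _ := ENNReal.le_tsum m
  -- the lintegral is finite
  have hsets : ∀ n : ℕ, MeasurableSet {ω | (n : ℝ) ≤ |M T ω|} :=
    fun n => measurableSet_le measurable_const hMT.abs
  have hlint : ∫⁻ ω, ENNReal.ofReal (Real.exp (lam * |M T ω|)) ∂μ < ⊤ := by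
    set r := ENNReal.ofReal (Real.exp (lam - L)) with hrdef
    have hr1 : r < 1 := by
      rw [hrdef, ← ENNReal.ofReal_one]
      exact ENNReal.ofReal_lt_ofReal_iff_of_nonneg (Real.exp_pos _).le |>.mpr
        (Real.exp_lt_one_iff.mpr (by linarith))
    calc ∫⁻ ω, ENNReal.ofReal (Real.exp (lam * |M T ω|)) ∂μ
        ≤ ∫⁻ ω, ∑' n : ℕ, Set.indicator {ω' | (n : ℝ) ≤ |M T ω'|}
            (fun _ => ENNReal.ofReal (Real.exp (lam * (n + 1)))) ω ∂μ :=
          lintegral_mono hpt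
      _ = ∑' n : ℕ, ∫⁻ ω, Set.indicator {ω' | (n : ℝ) ≤ |M T ω'|}
            (fun _ => ENNReal.ofReal (Real.exp (lam * (n + 1)))) ω ∂μ :=
          lintegral_tsum fun n =>
            (measurable_const.indicator (hsets n)).aemeasurable
      _ = ∑' n : ℕ, ENNReal.ofReal (Real.exp (lam * (n + 1))) * μ {ω | (n : ℝ) ≤ |M T ω|} := by
          congr 1
          ext n
          rw [lintegral_indicator (hsets n), setLIntegral_const]
      _ ≤ ∑' n : ℕ, ENNReal.ofReal (Real.exp lam * (3 + C)) * r ^ n := by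
          refine ENNReal.tsum_le_tsum fun n => ?_
          calc ENNReal.ofReal (Real.exp (lam * (n + 1))) * μ {ω | (n : ℝ) ≤ |M T ω|}
              ≤ ENNReal.ofReal (Real.exp (lam * (n + 1)))
                  * ENNReal.ofReal ((3 + C) * Real.exp (-(L * n))) :=
                mul_le_mul_right (htailn n) _
            _ = ENNReal.ofReal (Real.exp lam * (3 + C)) * r ^ n := by
                have e1 : Real.exp (lam * ((n : ℝ) + 1)) * Real.exp (-(L * n))
                    = Real.exp lam * Real.exp (lam - L) ^ n := by
                  rw [← Real.exp_nat_mul, ← Real.exp_add, ← Real.exp_add]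
                  congr 1
                  ring
                have key : Real.exp (lam * ((n : ℝ) + 1)) * ((3 + C) * Real.exp (-(L * n)))
                    = Real.exp lam * (3 + C) * Real.exp (lam - L) ^ n := by
                  rw [show Real.exp (lam * ((n : ℝ) + 1)) * ((3 + C) * Real.exp (-(L * n)))
                      = Real.exp (lam * ((n : ℝ) + 1)) * Real.exp (-(L * n)) * (3 + C) from by
                    ring, e1]
                  ring
                rw [hrdef, ← ENNReal.ofReal_pow (Real.exp_pos _).le,
                  ← ENNReal.ofReal_mul (Real.exp_pos _).le,
                  ← ENNReal.ofReal_mul (by positivity : (0:ℝ) ≤ Real.exp lam * (3 + C)), key]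
      _ = ENNReal.ofReal (Real.exp lam * (3 + C)) * ∑' n : ℕ, r ^ n := ENNReal.tsum_mul_left
      _ < ⊤ := by
          rw [ENNReal.tsum_geometric]
          exact ENNReal.mul_lt_top ENNReal.ofReal_lt_top
            (ENNReal.inv_lt_top.mpr (tsub_pos_of_lt hr1))
  refine ⟨hfmeas.aestronglyMeasurable, ?_⟩
  rw [hasFiniteIntegral_iff_ofReal (ae_of_all _ fun ω => (Real.exp_pos _).le)]
  exact hlint
end

section
/- Let X be a nonnegative random variable and Y a nonnegative random variable such that for every y > 0 and c > 0, P(X ≥ y, Y < c y) ≤ 2 exp(-y^{1/p}/(2 c^{1/p})), where p ∈ (0,1]. If E[exp(α Y)] < ∞ for some α > 0, then for any λ > 0 with (if p = 1) λ < √(α/2), we have E[exp(λ X)] < ∞, using the decomposition E[e^{λX}] = ∫_0^∞ P(X ≥ y) λ e^{λ y} dy ≤ ∫_0^∞ 2λ exp(λ y - y^{1/p}/(2c^{1/p})) dy + E[exp((λ/c) Y)] with c = λ/α. -/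
open MeasureTheory Real Set

private lemma aux_exp_integrable {q β lam : ℝ} (hq : 1 ≤ q) (hβ : 0 < β) (hlam : 0 < lam)
    (h1 : q = 1 → lam < β) :
    IntegrableOn (fun t => Real.exp (lam * t - β * t ^ q)) (Set.Ioi (0:ℝ)) := by
  have hq0 : (0:ℝ) < q := by linarith
  have hcont : Continuous fun t : ℝ => Real.exp (lam * t - β * t ^ q) := by
    have h1 : Continuous fun t : ℝ => t ^ q :=
      continuous_iff_continuousAt.2 fun x =>
        Real.continuousAt_rpow_const x q (Or.inr hq0.le)
    exact ((continuous_const.mul continuous_id).sub (continuous_const.mul h1)).rexp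
  rcases eq_or_lt_of_le hq with hq1 | hq1
  · -- q = 1
    have hb : 0 < β - lam := by have := h1 hq1.symm; linarith
    have := exp_neg_integrableOn_Ioi 0 hb
    refine this.congr_fun ?_ measurableSet_Ioi
    intro t _
    have ht : t ^ q = t := by rw [← hq1]; exact Real.rpow_one t
    simp only [ht]
    congr 1
    ring
  · -- q > 1
    obtain ⟨T, hT1, hT⟩ : ∃ T : ℝ, 1 ≤ T ∧ ∀ t, T ≤ t → lam * t - β * t ^ q ≤ -t := by
      refine ⟨max 1 (((lam + 1) / β) ^ (1 / (q - 1))), le_max_left _ _, fun t ht => ?_⟩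
      have ht1 : (1:ℝ) ≤ t := le_trans (le_max_left _ _) ht
      have ht0 : (0:ℝ) < t := by linarith
      have hbase : (0:ℝ) ≤ (lam + 1) / β := by positivity
      have h2 : ((lam + 1) / β) ^ (1 / (q - 1)) ≤ t := le_trans (le_max_right _ _) ht
      have h3 : (lam + 1) / β ≤ t ^ (q - 1) := by
        have h := Real.rpow_le_rpow (Real.rpow_nonneg hbase _) h2 (by linarith : (0:ℝ) ≤ q - 1)
        rwa [← Real.rpow_mul hbase, one_div,
          inv_mul_cancel₀ (by linarith : q - 1 ≠ 0), Real.rpow_one] at h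
      have h4 : lam + 1 ≤ β * t ^ (q - 1) := by
        rw [div_le_iff₀ hβ] at h3; linarith [h3]
      have h5 : t ^ q = t ^ (q - 1) * t := by
        rw [← Real.rpow_add_one (ne_of_gt ht0)]; ring_nf
      have h6 : (lam + 1) * t ≤ β * t ^ q := by
        rw [h5, ← mul_assoc]
        exact mul_le_mul_of_nonneg_right h4 ht0.le
      nlinarith
    have hT0 : (0:ℝ) ≤ T := by linarith
    have h1 : IntegrableOn (fun t => Real.exp (lam * t - β * t ^ q)) (Set.Ioc 0 T) :=
      hcont.integrableOn_Ioc
    have h2 : IntegrableOn (fun t => Real.exp (lam * t - β * t ^ q)) (Set.Ioi T) := by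
      refine (exp_neg_integrableOn_Ioi T one_pos).mono' hcont.aestronglyMeasurable ?_
      filter_upwards [ae_restrict_mem measurableSet_Ioi] with t ht
      rw [Real.norm_eq_abs, abs_of_pos (Real.exp_pos _)]
      simpa using Real.exp_le_exp.2 (hT t (le_of_lt ht))
    simpa [Set.Ioc_union_Ioi_eq_Ioi hT0] using h1.union h2

/-- Tail-splitting lemma: if `P(X ≥ y, Y < cy) ≤ 2 exp(-y^{1/p}/(2c^{1/p}))` for all `y, c > 0`,
and `E[exp(α Y)] < ∞`, then `E[exp(λ X)] < ∞` for `λ > 0` with `λ < √(α/2)` when `p = 1`. -/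
theorem exp_moment_from_tail {Ω : Type*} [MeasurableSpace Ω] (μ : Measure Ω)
    [IsProbabilityMeasure μ] (X Y : Ω → ℝ)
    (hX : Measurable X) (hY : Measurable Y)
    (hXnonneg : ∀ ω, 0 ≤ X ω) (hYnonneg : ∀ ω, 0 ≤ Y ω)
    (p : ℝ) (hp : 0 < p) (hp1 : p ≤ 1)
    (htail : ∀ y c : ℝ, 0 < y → 0 < c →
      μ {ω | y ≤ X ω ∧ Y ω < c * y} ≤
        ENNReal.ofReal (2 * Real.exp (-(y ^ (1 / p)) / (2 * c ^ (1 / p)))))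
    (α : ℝ) (hα : 0 < α)
    (hint : Integrable (fun ω => Real.exp (α * Y ω)) μ)
    (lam : ℝ) (hlam : 0 < lam) (hlam1 : p = 1 → lam < Real.sqrt (α / 2)) :
    Integrable (fun ω => Real.exp (lam * X ω)) μ := by
  set c : ℝ := lam / α with hc_def
  have hc : 0 < c := div_pos hlam hα
  set q : ℝ := 1 / p with hq_def
  have hq1 : 1 ≤ q := by
    rw [hq_def, le_div_iff₀ hp]; linarith
  have hq0 : 0 < q := by linarith
  set β : ℝ := 1 / (2 * c ^ q) with hβ_def
  have hβ : 0 < β := by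
    have : (0:ℝ) < c ^ q := Real.rpow_pos_of_pos hc q
    positivity
  -- the interval integral of g t = lam * exp (lam * t)
  have gcont : Continuous fun t : ℝ => lam * Real.exp (lam * t) :=
    continuous_const.mul ((continuous_const.mul continuous_id).rexp)
  have hg : ∀ x : ℝ, (∫ t in (0:ℝ)..x, lam * Real.exp (lam * t)) = Real.exp (lam * x) - 1 := by
    intro x
    have hderiv : ∀ t ∈ Set.uIcc (0:ℝ) x,
        HasDerivAt (fun s => Real.exp (lam * s)) (lam * Real.exp (lam * t)) t := by
      intro t _
      simpa [mul_comm] using ((hasDerivAt_id t).const_mul lam).exp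
    rw [intervalIntegral.integral_eq_sub_of_hasDerivAt hderiv
      (gcont.intervalIntegrable 0 x)]
    simp
  have g_intble : ∀ t > (0:ℝ), IntervalIntegrable (fun s => lam * Real.exp (lam * s)) volume 0 t :=
    fun t _ => gcont.intervalIntegrable 0 t
  have g_nn : ∀ᵐ t ∂(volume.restrict (Set.Ioi (0:ℝ))), 0 ≤ lam * Real.exp (lam * t) :=
    ae_of_all _ fun t => by positivity
  -- layer cake for X
  have hLCX := lintegral_comp_eq_lintegral_meas_le_mul μ (ae_of_all μ hXnonneg)
    hX.aemeasurable g_intble g_nn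
  -- layer cake for Y / c
  have hLCY := lintegral_comp_eq_lintegral_meas_le_mul μ
    (ae_of_all μ fun ω => div_nonneg (hYnonneg ω) hc.le : 0 ≤ᵐ[μ] fun ω => Y ω / c)
    (hY.div_const c).aemeasurable g_intble g_nn
  -- identify sets in hLCY
  have hsetY : ∀ t : ℝ, {a : Ω | t ≤ Y a / c} = {a : Ω | c * t ≤ Y a} := by
    intro t
    ext a
    simp only [Set.mem_setOf_eq, le_div_iff₀ hc, mul_comm]
  -- B is finite
  have hB : (∫⁻ t in Set.Ioi (0:ℝ), μ {a | c * t ≤ Y a}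
      * ENNReal.ofReal (lam * Real.exp (lam * t))) < ⊤ := by
    have heq : (∫⁻ t in Set.Ioi (0:ℝ), μ {a | c * t ≤ Y a}
        * ENNReal.ofReal (lam * Real.exp (lam * t)))
        = ∫⁻ ω, ENNReal.ofReal (∫ t in (0:ℝ)..(Y ω / c), lam * Real.exp (lam * t)) ∂μ := by
      rw [hLCY]
      apply lintegral_congr_ae
      filter_upwards with t
      rw [hsetY t]
    rw [heq]
    have hle : ∀ ω, ENNReal.ofReal (∫ t in (0:ℝ)..(Y ω / c), lam * Real.exp (lam * t))
        ≤ ‖Real.exp (α * Y ω)‖₊ := by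
      intro ω
      rw [hg]
      have h1 : lam * (Y ω / c) = α * Y ω := by
        rw [hc_def]; field_simp
      rw [h1, ← enorm_eq_nnnorm, Real.enorm_eq_ofReal (Real.exp_pos _).le]
      exact ENNReal.ofReal_le_ofReal (by linarith [Real.exp_pos (α * Y ω)])
    calc _ ≤ ∫⁻ ω, (‖Real.exp (α * Y ω)‖₊ : ENNReal) ∂μ := lintegral_mono hle
      _ < ⊤ := hint.hasFiniteIntegral
  -- A is finite
  have hA : (∫⁻ t in Set.Ioi (0:ℝ), ENNReal.ofReal (2 * Real.exp (-(t ^ q) / (2 * c ^ q)))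
      * ENNReal.ofReal (lam * Real.exp (lam * t))) < ⊤ := by
    have hint2 : IntegrableOn (fun t => (2 * lam) * Real.exp (lam * t - β * t ^ q))
        (Set.Ioi (0:ℝ)) := by
      refine (aux_exp_integrable hq1 hβ hlam ?_).const_mul _
      intro hq1'
      have hp1' : p = 1 := by
        rw [hq_def] at hq1'
        field_simp at hq1'
        linarith
      have h2 := hlam1 hp1'
      have h3 : lam ^ 2 < α / 2 := (Real.lt_sqrt hlam.le).1 h2
      rw [hβ_def, hq1', Real.rpow_one, hc_def]
      rw [lt_div_iff₀ (by positivity)]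
      have hg2 : lam * (2 * (lam / α)) = 2 * lam ^ 2 / α := by ring
      rw [hg2, div_lt_one hα]
      nlinarith
    have hptwise : ∀ t ∈ Set.Ioi (0:ℝ),
        ENNReal.ofReal (2 * Real.exp (-(t ^ q) / (2 * c ^ q)))
          * ENNReal.ofReal (lam * Real.exp (lam * t))
        ≤ ‖(2 * lam) * Real.exp (lam * t - β * t ^ q)‖₊ := by
      intro t _
      rw [← ENNReal.ofReal_mul (by positivity),
        ← enorm_eq_nnnorm, Real.enorm_eq_ofReal (by positivity)]
      apply ENNReal.ofReal_le_ofReal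
      have : -(t ^ q) / (2 * c ^ q) + lam * t = lam * t - β * t ^ q := by
        rw [hβ_def]
        have hcq : (0:ℝ) < c ^ q := Real.rpow_pos_of_pos hc q
        field_simp
        ring
      apply le_of_eq
      rw [← this, Real.exp_add]
      ring
    calc (∫⁻ t in Set.Ioi (0:ℝ), ENNReal.ofReal (2 * Real.exp (-(t ^ q) / (2 * c ^ q)))
          * ENNReal.ofReal (lam * Real.exp (lam * t)))
        ≤ ∫⁻ t in Set.Ioi (0:ℝ), (‖(2 * lam) * Real.exp (lam * t - β * t ^ q)‖₊ : ENNReal) := by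
          apply setLIntegral_mono' measurableSet_Ioi hptwise
      _ < ⊤ := hint2.hasFiniteIntegral
  -- tail splitting
  have hsplit : ∀ t : ℝ, 0 < t → μ {a | t ≤ X a}
      ≤ ENNReal.ofReal (2 * Real.exp (-(t ^ q) / (2 * c ^ q))) + μ {a | c * t ≤ Y a} := by
    intro t ht
    have hsub : {a : Ω | t ≤ X a} ⊆ {a | t ≤ X a ∧ Y a < c * t} ∪ {a | c * t ≤ Y a} := by
      intro a ha
      by_cases h : Y a < c * t
      · exact Or.inl ⟨ha, h⟩
      · exact Or.inr (le_of_not_gt h)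
    calc μ {a | t ≤ X a} ≤ μ ({a | t ≤ X a ∧ Y a < c * t} ∪ {a | c * t ≤ Y a}) :=
          measure_mono hsub
      _ ≤ μ {a | t ≤ X a ∧ Y a < c * t} + μ {a | c * t ≤ Y a} := measure_union_le _ _
      _ ≤ _ := by
          gcongr
          exact htail t c ht hc
  -- conclude
  refine ⟨(Real.measurable_exp.comp (hX.const_mul lam)).aestronglyMeasurable, ?_⟩
  rw [hasFiniteIntegral_iff_ofReal (ae_of_all μ fun ω => (Real.exp_pos _).le)]
  have hkey : ∀ ω, ENNReal.ofReal (Real.exp (lam * X ω))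
      = 1 + ENNReal.ofReal (∫ t in (0:ℝ)..(X ω), lam * Real.exp (lam * t)) := by
    intro ω
    rw [hg]
    have h1 : (1:ℝ) ≤ Real.exp (lam * X ω) := by
      rw [← Real.exp_zero]
      exact Real.exp_le_exp.2 (mul_nonneg hlam.le (hXnonneg ω))
    rw [← ENNReal.ofReal_one, ← ENNReal.ofReal_add zero_le_one (by linarith)]
    congr 1
    ring
  calc (∫⁻ ω, ENNReal.ofReal (Real.exp (lam * X ω)) ∂μ)
      = ∫⁻ ω, (1 + ENNReal.ofReal (∫ t in (0:ℝ)..(X ω), lam * Real.exp (lam * t))) ∂μ := by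
        apply lintegral_congr fun ω => hkey ω
    _ = 1 + ∫⁻ ω, ENNReal.ofReal (∫ t in (0:ℝ)..(X ω), lam * Real.exp (lam * t)) ∂μ := by
        rw [lintegral_add_left measurable_const]
        simp
    _ = 1 + ∫⁻ t in Set.Ioi (0:ℝ), μ {a | t ≤ X a}
          * ENNReal.ofReal (lam * Real.exp (lam * t)) := by rw [hLCX]
    _ ≤ 1 + ((∫⁻ t in Set.Ioi (0:ℝ), ENNReal.ofReal (2 * Real.exp (-(t ^ q) / (2 * c ^ q)))
          * ENNReal.ofReal (lam * Real.exp (lam * t)))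
        + ∫⁻ t in Set.Ioi (0:ℝ), μ {a | c * t ≤ Y a}
          * ENNReal.ofReal (lam * Real.exp (lam * t))) := by
        gcongr
        rw [← lintegral_add_left]
        · apply setLIntegral_mono' measurableSet_Ioi
          intro t ht
          rw [← add_mul]
          exact mul_le_mul_left (hsplit t ht) _
        · exact (ENNReal.measurable_ofReal.comp (by fun_prop)).mul
            (ENNReal.measurable_ofReal.comp (by fun_prop))
    _ < ⊤ := by
        rw [ENNReal.add_lt_top, ENNReal.add_lt_top]
        exact ⟨ENNReal.one_lt_top, hA, hB⟩
end

section
/- Let B^H be a one-dimensional fractional Brownian motion with Hurst parameter H ∈ (0,1), and let 0 ≤ s < r < t. Then E[(E[B_t^H − B_s^H | F_r])²] ≥ (t−s)^{2H} − (t−r)^{2H}, where (F_u) is the natural filtration of B^H. -/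
open MeasureTheory ProbabilityTheory Real NNReal


lemma memLp_two_gaussianReal (v : ℝ≥0) : MemLp (fun x : ℝ => x) 2 (gaussianReal 0 v) := by
  by_cases hv : v = 0
  · subst hv
    rw [gaussianReal_zero_var]
    exact (memLp_const (0 : ℝ)).ae_eq (ae_eq_dirac (fun x : ℝ => x)).symm
  · rw [gaussianReal_of_var_ne_zero _ hv]
    refine (memLp_two_iff_integrable_sq measurable_id.aestronglyMeasurable).2 ?_
    rw [integrable_withDensity_iff (measurable_gaussianPDF _ _)
      (ae_of_all _ fun x => ENNReal.ofReal_lt_top)]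
    have hv' : (0 : ℝ) < (v : ℝ) := by
      exact_mod_cast lt_of_le_of_ne (zero_le (a := v)) (Ne.symm hv)
    have hb : (0 : ℝ) < (2 * (v : ℝ))⁻¹ := by positivity
    have heq : (fun x : ℝ => x ^ 2 * (gaussianPDF 0 v x).toReal)
        = fun x : ℝ => (√(2 * π * (v : ℝ)))⁻¹ * (x ^ 2 * rexp (-(2 * (v : ℝ))⁻¹ * x ^ 2)) := by
      ext x
      rw [gaussianPDF, ENNReal.toReal_ofReal (gaussianPDFReal_nonneg _ _ _), gaussianPDFReal]
      have : -(x - 0) ^ 2 / (2 * (v : ℝ)) = -(2 * (v : ℝ))⁻¹ * x ^ 2 := by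
        field_simp
        ring
      rw [this]; ring
    simp only [id] at *
    rw [heq]
    have := integrable_rpow_mul_exp_neg_mul_sq hb (s := 2) (by norm_num)
    simp_rw [Real.rpow_two] at this
    exact this.const_mul _

lemma memLp_two_of_map_gaussian {Ω : Type*} [MeasurableSpace Ω] {μ : Measure Ω} {f : Ω → ℝ}
    (hf : Measurable f) {v : ℝ≥0} (h : μ.map f = gaussianReal 0 v) : MemLp f 2 μ := by
  have h2 : MemLp (fun x : ℝ => x) 2 (μ.map f) := h ▸ memLp_two_gaussianReal v
  exact (memLp_map_measure_iff h2.aestronglyMeasurable hf.aemeasurable).1 h2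


lemma integrable_mul_of_memLp_two {Ω : Type*} [MeasurableSpace Ω] {μ : Measure Ω} {f g : Ω → ℝ}
    (hf : MemLp f 2 μ) (hg : MemLp g 2 μ) : Integrable (fun ω => f ω * g ω) μ := by
  refine Integrable.mono' ((hf.integrable_sq.add hg.integrable_sq).div_const 2)
    (hf.aestronglyMeasurable.mul hg.aestronglyMeasurable) (ae_of_all _ fun ω => ?_)
  simp only [Pi.add_apply]
  rw [Real.norm_eq_abs, abs_mul]
  nlinarith [sq_nonneg (|f ω| - |g ω|), sq_abs (f ω), sq_abs (g ω), abs_nonneg (f ω),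
    abs_nonneg (g ω)]

lemma memLp_two_condexp {Ω : Type*} {m : MeasurableSpace Ω} [m0 : MeasurableSpace Ω] {μ : Measure Ω}
    [IsFiniteMeasure μ] (hm : m ≤ m0) {f : Ω → ℝ}
    (hf : MemLp f 2 μ) : MemLp (μ[f|m]) 2 μ := by
  haveI : SigmaFinite (μ.trim hm) := inferInstance
  set g : Lp ℝ 2 μ := (condExpL2 ℝ ℝ hm (hf.toLp f) : Lp ℝ 2 μ) with hg
  have hae : (g : Ω → ℝ) =ᵐ[μ] μ[f|m] := by
    refine ae_eq_condExp_of_forall_setIntegral_eq hm (hf.integrable one_le_two)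
      (fun s hs hμs => integrableOn_condExpL2_of_measure_ne_top hm hμs.ne _)
      (fun s hs hμs => ?_) (aestronglyMeasurable_condExpL2 hm _)
    have h' := integral_condExpL2_eq (E' := ℝ) (𝕜 := ℝ) hm (hf.toLp f) hs hμs.ne
    have h'' : ∫ x in s, (hf.toLp f : Ω → ℝ) x ∂μ = ∫ x in s, f x ∂μ :=
      setIntegral_congr_ae (hm s hs) ((hf.coeFn_toLp).mono fun x hx _ => hx)
    exact h'.trans h''
  exact (Lp.memLp g).ae_eq hae

/-- The natural filtration of the process `B`: the σ-field generated by `B_u` for `0 ≤ u ≤ r`. -/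
noncomputable def natSigma {Ω : Type*} (B : ℝ → Ω → ℝ) (r : ℝ) : MeasurableSpace Ω :=
  ⨆ u ∈ Set.Icc (0 : ℝ) r, MeasurableSpace.comap (B u) inferInstance

/-- For a one-dimensional fractional Brownian motion `B` with Hurst parameter `H ∈ (0,1)` and
`0 ≤ s < r < t`, `E[(E[B_t − B_s | F_r])²] ≥ (t−s)^{2H} − (t−r)^{2H}`. -/
theorem fbm_condexp_sq_lower_bound {Ω : Type*} [m0 : MeasurableSpace Ω] (μ : Measure Ω)
    [IsProbabilityMeasure μ] (H : ℝ) (hH0 : 0 < H) (hH1 : H < 1)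
    (B : ℝ → Ω → ℝ) (hmeas : ∀ t, Measurable (B t))
    (hgauss : ∀ (n : ℕ) (t : Fin n → ℝ) (c : Fin n → ℝ), (∀ i, 0 ≤ t i) →
      ∃ v : ℝ≥0, μ.map (fun ω => ∑ i, c i * B (t i) ω) = gaussianReal 0 v)
    (hcov : ∀ s t : ℝ, 0 ≤ s → 0 ≤ t →
      ∫ ω, B t ω * B s ω ∂μ = (t ^ (2 * H) + s ^ (2 * H) - |t - s| ^ (2 * H)) / 2)
    (s r t : ℝ) (hs : 0 ≤ s) (hsr : s < r) (hrt : r < t) :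
    (t - s) ^ (2 * H) - (t - r) ^ (2 * H) ≤
      ∫ ω, ((μ[fun ω => B t ω - B s ω | natSigma B r]) ω) ^ 2 ∂μ := by
  have hr : 0 ≤ r := hs.trans hsr.le
  have ht : 0 ≤ t := hr.trans hrt.le
  -- the filtration σ-algebra
  have hm : natSigma B r ≤ m0 := by
    refine iSup₂_le fun u _ => ?_
    exact (hmeas u).comap_le
  haveI : SigmaFinite (μ.trim hm) := inferInstance
  -- L² membership of the B's
  have hL2 : ∀ u : ℝ, 0 ≤ u → MemLp (B u) 2 μ := by
    intro u hu
    obtain ⟨v, hv⟩ := hgauss 1 (fun _ => u) (fun _ => 1) (fun _ => hu)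
    have heq : (fun ω => ∑ i : Fin 1, (1 : ℝ) * B u ω) = B u := by
      ext ω; simp
    rw [heq] at hv
    exact memLp_two_of_map_gaussian (hmeas u) hv
  have hBs := hL2 s hs
  have hBr := hL2 r hr
  have hBt := hL2 t ht
  set X : Ω → ℝ := fun ω => B t ω - B s ω with hX_def
  set Z : Ω → ℝ := fun ω => B r ω - B s ω with hZ_def
  have hX : MemLp X 2 μ := hBt.sub hBs
  have hZ : MemLp Z 2 μ := hBr.sub hBs
  set Y : Ω → ℝ := μ[X | natSigma B r] with hY_def
  have hY : MemLp Y 2 μ := memLp_two_condexp hm hX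
  -- Z is measurable w.r.t. the filtration
  have hZm : StronglyMeasurable[natSigma B r] Z := by
    have h1 : Measurable[natSigma B r] (B r) := by
      refine Measurable.of_comap_le ?_
      exact le_iSup₂ (f := fun u (_ : u ∈ Set.Icc (0 : ℝ) r) =>
        MeasurableSpace.comap (B u) inferInstance) r ⟨hr, le_refl r⟩
    have h2 : Measurable[natSigma B r] (B s) := by
      refine Measurable.of_comap_le ?_
      exact le_iSup₂ (f := fun u (_ : u ∈ Set.Icc (0 : ℝ) r) =>
        MeasurableSpace.comap (B u) inferInstance) s ⟨hs, hsr.le⟩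
    exact (h1.sub h2).stronglyMeasurable
  -- abbreviations for the rpow quantities
  set a : ℝ := (t - s) ^ (2 * H) - (t - r) ^ (2 * H) with ha_def
  set b : ℝ := (r - s) ^ (2 * H) with hb_def
  have h2H : 0 < 2 * H := by linarith
  have ha : 0 ≤ a := by
    rw [ha_def]
    have := Real.rpow_le_rpow (by linarith : (0:ℝ) ≤ t - r) (by linarith : t - r ≤ t - s) h2H.le
    linarith
  have hb : 0 < b := Real.rpow_pos_of_pos (by linarith) _
  -- integrability of products
  have hint_ZX : Integrable (fun ω => Z ω * X ω) μ := integrable_mul_of_memLp_two hZ hX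
  have hint_ZY : Integrable (fun ω => Z ω * Y ω) μ := integrable_mul_of_memLp_two hZ hY
  have hint_Y2 : Integrable (fun ω => Y ω ^ 2) μ := hY.integrable_sq
  have hint_Z2 : Integrable (fun ω => Z ω ^ 2) μ := hZ.integrable_sq
  have hint : ∀ u v : ℝ, 0 ≤ u → 0 ≤ v → Integrable (fun ω => B u ω * B v ω) μ :=
    fun u v hu hv => integrable_mul_of_memLp_two (hL2 u hu) (hL2 v hv)
  -- covariance computations
  have habs1 : |t - r| = t - r := abs_of_pos (by linarith)
  have habs2 : |t - s| = t - s := abs_of_pos (by linarith)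
  have habs3 : |r - s| = r - s := abs_of_pos (by linarith)
  have hzero : |s - s| ^ (2 * H) = 0 := by
    rw [sub_self, abs_zero, Real.zero_rpow h2H.ne']
  -- E[Z X]
  have hZX : ∫ ω, Z ω * X ω ∂μ = (a + b) / 2 := by
    have e1 : (fun ω => Z ω * X ω) = fun ω =>
        (B t ω * B r ω - B r ω * B s ω) - (B t ω * B s ω - B s ω * B s ω) := by
      ext ω; simp only [hZ_def, hX_def]; ring
    have i1 : Integrable (fun ω => B t ω * B r ω - B r ω * B s ω) μ :=
      (hint t r ht hr).sub (hint r s hr hs)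
    have i2 : Integrable (fun ω => B t ω * B s ω - B s ω * B s ω) μ :=
      (hint t s ht hs).sub (hint s s hs hs)
    rw [e1, integral_sub i1 i2,
      integral_sub (hint t r ht hr) (hint r s hr hs),
      integral_sub (hint t s ht hs) (hint s s hs hs),
      hcov r t hr ht, hcov s r hs hr, hcov s t hs ht, hcov s s hs hs,
      habs1, habs2, habs3, hzero, ha_def, hb_def]
    ring
  -- E[Z²]
  have hZ2 : ∫ ω, Z ω ^ 2 ∂μ = b := by
    have e1 : (fun ω => Z ω ^ 2) = fun ω =>
        (B r ω * B r ω - B r ω * B s ω) - (B r ω * B s ω - B s ω * B s ω) := by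
      ext ω; simp only [hZ_def]; ring
    have i1 : Integrable (fun ω => B r ω * B r ω - B r ω * B s ω) μ :=
      (hint r r hr hr).sub (hint r s hr hs)
    have i2 : Integrable (fun ω => B r ω * B s ω - B s ω * B s ω) μ :=
      (hint r s hr hs).sub (hint s s hs hs)
    rw [e1, integral_sub i1 i2,
      integral_sub (hint r r hr hr) (hint r s hr hs),
      integral_sub (hint r s hr hs) (hint s s hs hs),
      hcov r r hr hr, hcov s r hs hr, hcov s s hs hs, habs3, hzero, hb_def]
    have : |r - r| ^ (2 * H) = 0 := by rw [sub_self, abs_zero, Real.zero_rpow h2H.ne']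
    rw [this]; ring
  -- projection property : E[Z Y] = E[Z X]
  have hproj : ∫ ω, Z ω * Y ω ∂μ = (a + b) / 2 := by
    have hmul : μ[Z * X | natSigma B r] =ᵐ[μ] Z * μ[X | natSigma B r] :=
      condExp_mul_of_stronglyMeasurable_left hZm hint_ZX (hX.integrable one_le_two)
    calc ∫ ω, Z ω * Y ω ∂μ = ∫ ω, (Z * μ[X | natSigma B r]) ω ∂μ := rfl
      _ = ∫ ω, (μ[Z * X | natSigma B r]) ω ∂μ := (integral_congr_ae hmul).symm
      _ = ∫ ω, (Z * X) ω ∂μ := integral_condExp hm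
      _ = (a + b) / 2 := hZX
  -- Cauchy–Schwarz via expansion
  set A : ℝ := ∫ ω, Y ω ^ 2 ∂μ with hA_def
  set c : ℝ := (a + b) / 2 with hc_def
  have hexp : ∫ ω, (b * Y ω - c * Z ω) ^ 2 ∂μ = b ^ 2 * A - 2 * b * c * c + c ^ 2 * b := by
    have e1 : (fun ω => (b * Y ω - c * Z ω) ^ 2) = fun ω =>
        (b ^ 2 * Y ω ^ 2 - 2 * b * c * (Z ω * Y ω)) + c ^ 2 * Z ω ^ 2 := by
      ext ω; ring
    have i1 : Integrable (fun ω => b ^ 2 * Y ω ^ 2 - 2 * b * c * (Z ω * Y ω)) μ :=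
      (hint_Y2.const_mul _).sub (hint_ZY.const_mul _)
    have i2 : Integrable (fun ω => c ^ 2 * Z ω ^ 2) μ := hint_Z2.const_mul _
    have i3 : Integrable (fun ω => b ^ 2 * Y ω ^ 2) μ := hint_Y2.const_mul _
    have i4 : Integrable (fun ω => 2 * b * c * (Z ω * Y ω)) μ := hint_ZY.const_mul _
    rw [e1, integral_add i1 i2, integral_sub i3 i4,
      integral_const_mul, integral_const_mul, integral_const_mul, hproj, hZ2, hA_def]
  have h0 : 0 ≤ b ^ 2 * A - 2 * b * c * c + c ^ 2 * b := by
    rw [← hexp]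
    exact integral_nonneg fun ω => sq_nonneg _
  -- conclude
  rw [hc_def] at h0
  show a ≤ A
  clear_value a b A c
  clear ha_def hb_def hA_def hc_def
  nlinarith [h0, mul_nonneg hb.le (sq_nonneg (a - b)), mul_pos hb hb]
end

section
/- Suppose H < min(2/(d+1), 3/(2d)) and T > 0. Let K_H(t,s) be the Volterra kernel of fractional Brownian motion with Hurst parameter H. Then there is a constant C such that for all r ∈ (0,T], ∫_r^T ∫_r^t (t−s)^{−Hd−H} |K_H(t,r) − K_H(s,r)| ds dt ≤ C (r^{1/2−H} ∨ 1). -/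
open MeasureTheory Real NNReal

/-- The Beta function `B(x,y) = Γ(x)Γ(y)/Γ(x+y)`. -/
noncomputable def betaFn (x y : ℝ) : ℝ := Real.Gamma x * Real.Gamma y / Real.Gamma (x + y)

/-- The Volterra kernel `K_H(t,s)` of fractional Brownian motion with Hurst parameter `H`. -/
noncomputable def KH (H t s : ℝ) : ℝ :=
  if 1 / 2 < H then
    Real.sqrt (H * (2 * H - 1) / betaFn (2 - 2 * H) (H - 1 / 2)) * s ^ ((1 : ℝ) / 2 - H) *
      ∫ u in s..t, (u - s) ^ (H - 3 / 2) * u ^ (H - 1 / 2)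
  else if H = 1 / 2 then 1
  else
    Real.sqrt (2 * H / ((1 - 2 * H) * betaFn (1 - 2 * H) (H + 1 / 2))) *
      ((t / s) ^ (H - 1 / 2) * (t - s) ^ (H - 1 / 2) -
        (H - 1 / 2) * s ^ ((1 : ℝ) / 2 - H) *
          ∫ u in s..t, u ^ (H - 3 / 2) * (u - s) ^ (H - 1 / 2))


lemma rpow_add_le (A L p : ℝ) (hA : 0 ≤ A) (hL : 0 ≤ L) (hp0 : 0 ≤ p) (hp1 : p ≤ 1) :
    (A + L) ^ p ≤ A ^ p + L ^ p := by
  have h2 := NNReal.rpow_add_le_add_rpow A.toNNReal L.toNNReal hp0 hp1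
  have h3 : (((A.toNNReal + L.toNNReal) ^ p : ℝ≥0) : ℝ) ≤
      ((A.toNNReal ^ p + L.toNNReal ^ p : ℝ≥0) : ℝ) := by exact_mod_cast h2
  rw [NNReal.coe_rpow, NNReal.coe_add, NNReal.coe_add, NNReal.coe_rpow, NNReal.coe_rpow,
    Real.coe_toNNReal _ hA, Real.coe_toNNReal _ hL] at h3
  exact h3

lemma shift_int (A B b : ℝ) (hA : 0 < A) (hAB : A ≤ B) (hb0 : 0 < b) (hb1 : b ≤ 1) :
    ∫ w in A..B, w ^ (b - 1) ≤ (B - A) ^ b / b := by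
  rw [integral_rpow (Or.inl (by linarith))]
  have hb : b - 1 + 1 = b := by ring
  rw [hb]
  have h1 : B ^ b ≤ A ^ b + (B - A) ^ b := by
    have := rpow_add_le A (B - A) b hA.le (by linarith) hb0.le hb1
    simpa using this
  exact (div_le_div_iff_of_pos_right hb0).mpr (by linarith)

lemma lint_left (a b c α : ℝ) (hab : a ≤ b) (hα : -1 < α) (hc : 0 ≤ c) :
    ∫⁻ s in Set.Ioc a b, ENNReal.ofReal (c * (s - a) ^ α) =
      ENNReal.ofReal (c * ((b - a) ^ (α + 1) / (α + 1))) := by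
  have hii : IntervalIntegrable (fun s : ℝ => c * (s - a) ^ α) volume a b := by
    have h0 : IntervalIntegrable (fun x : ℝ => x ^ α) volume (a - a) (b - a) :=
      intervalIntegral.intervalIntegrable_rpow' hα
    have h1 := h0.comp_sub_right a
    simp only [sub_add_cancel] at h1
    exact h1.const_mul c
  have hInt : IntegrableOn (fun s : ℝ => c * (s - a) ^ α) (Set.Ioc a b) :=
    (intervalIntegrable_iff_integrableOn_Ioc_of_le hab).mp hii
  have hae : 0 ≤ᶠ[ae (volume.restrict (Set.Ioc a b))] fun s : ℝ => c * (s - a) ^ α := by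
    rw [Filter.EventuallyLE]
    rw [ae_restrict_iff' measurableSet_Ioc]
    exact Filter.Eventually.of_forall fun s hs =>
      mul_nonneg hc (Real.rpow_nonneg (by linarith [hs.1]) _)
  rw [← ofReal_integral_eq_lintegral_ofReal hInt hae]
  congr 1
  rw [← intervalIntegral.integral_of_le hab, intervalIntegral.integral_const_mul]
  congr 1
  rw [intervalIntegral.integral_comp_sub_right (fun x => x ^ α) a,
    integral_rpow (Or.inl hα)]
  rw [sub_self, Real.zero_rpow (by linarith : α + 1 ≠ 0), sub_zero]

lemma lint_right (a b c β : ℝ) (hab : a ≤ b) (hβ : -1 < β) (hc : 0 ≤ c) :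
    ∫⁻ s in Set.Ioc a b, ENNReal.ofReal (c * (b - s) ^ β) =
      ENNReal.ofReal (c * ((b - a) ^ (β + 1) / (β + 1))) := by
  have hii : IntervalIntegrable (fun s : ℝ => c * (b - s) ^ β) volume a b := by
    have h0 : IntervalIntegrable (fun x : ℝ => x ^ β) volume (b - a) (b - b) :=
      intervalIntegral.intervalIntegrable_rpow' hβ
    have h1 := h0.comp_sub_left b
    simp only [sub_sub_cancel, sub_self, sub_zero] at h1
    exact h1.const_mul c
  have hInt : IntegrableOn (fun s : ℝ => c * (b - s) ^ β) (Set.Ioc a b) :=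
    (intervalIntegrable_iff_integrableOn_Ioc_of_le hab).mp hii
  have hae : 0 ≤ᶠ[ae (volume.restrict (Set.Ioc a b))] fun s : ℝ => c * (b - s) ^ β := by
    rw [Filter.EventuallyLE, ae_restrict_iff' measurableSet_Ioc]
    exact Filter.Eventually.of_forall fun s hs =>
      mul_nonneg hc (Real.rpow_nonneg (by linarith [hs.2]) _)
  rw [← ofReal_integral_eq_lintegral_ofReal hInt hae]
  congr 1
  rw [← intervalIntegral.integral_of_le hab, intervalIntegral.integral_const_mul]
  congr 1
  rw [intervalIntegral.integral_comp_sub_left (fun x => x ^ β) b,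
    integral_rpow (Or.inl hβ)]
  rw [sub_self, Real.zero_rpow (by linarith : β + 1 ≠ 0), sub_zero]

lemma lint_two_pow (r t K α β : ℝ) (hrt : r < t) (hα : -1 < α) (hβ : -1 < β) (hK : 0 ≤ K) :
    ∫⁻ s in Set.Ioc r t, ENNReal.ofReal (K * ((s - r) ^ α * (t - s) ^ β)) ≤
      ENNReal.ofReal (K * ((((2:ℝ) ^ (-β) + 1) * (2:ℝ) ^ (-(α + 1)) / (α + 1) +
        ((2:ℝ) ^ (-α) + 1) * (2:ℝ) ^ (-(β + 1)) / (β + 1)) * (t - r) ^ (α + β + 1))) := by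
  set m := (r + t) / 2 with hm
  have hx : 0 < t - r := by linarith
  have hm1 : r ≤ m := by rw [hm]; linarith
  have hm2 : m ≤ t := by rw [hm]; linarith
  set x := t - r with hxd
  have hmr : m - r = x / 2 := by rw [hm, hxd]; ring
  have htm : t - m = x / 2 := by rw [hm, hxd]; ring
  set c₁ := K * ((x / 2) ^ β + x ^ β) with hc₁
  set c₂ := K * ((x / 2) ^ α + x ^ α) with hc₂
  have hc₁0 : 0 ≤ c₁ := mul_nonneg hK
    (add_nonneg (Real.rpow_nonneg (by linarith) _) (Real.rpow_nonneg hx.le _))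
  have hc₂0 : 0 ≤ c₂ := mul_nonneg hK
    (add_nonneg (Real.rpow_nonneg (by linarith) _) (Real.rpow_nonneg hx.le _))
  rw [← Set.Ioc_union_Ioc_eq_Ioc hm1 hm2,
    lintegral_union measurableSet_Ioc (Set.Ioc_disjoint_Ioc_of_le le_rfl)]
  have e1 : ∫⁻ s in Set.Ioc r m, ENNReal.ofReal (K * ((s - r) ^ α * (t - s) ^ β)) ≤
      ENNReal.ofReal (c₁ * ((x / 2) ^ (α + 1) / (α + 1))) := by
    have mono := setLIntegral_mono (s := Set.Ioc r m)
      (μ := volume) (f := fun s => ENNReal.ofReal (K * ((s - r) ^ α * (t - s) ^ β)))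
      (g := fun s => ENNReal.ofReal (c₁ * (s - r) ^ α)) (by fun_prop) ?_
    · rw [lint_left r m c₁ α hm1 hα hc₁0, hmr] at mono
      exact mono
    · intro s hs
      apply ENNReal.ofReal_le_ofReal
      have hsr : 0 ≤ s - r := by linarith [hs.1]
      have h1 : (t - s) ^ β ≤ (x / 2) ^ β + x ^ β := by
        rcases le_or_gt 0 β with hβ0 | hβ0
        · have h := Real.rpow_le_rpow (by linarith [hs.2, hm2] : (0:ℝ) ≤ t - s)
            (by rw [hxd]; linarith [hs.1] : t - s ≤ x) hβ0
          have h2 : (0:ℝ) ≤ (x / 2) ^ β := Real.rpow_nonneg (by linarith) _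
          linarith
        · have h := Real.rpow_le_rpow_of_nonpos (by linarith : (0:ℝ) < x / 2)
            (by rw [hxd]; linarith [hs.2, htm] : x / 2 ≤ t - s) hβ0.le
          have h2 : (0:ℝ) ≤ x ^ β := Real.rpow_nonneg hx.le _
          linarith
      calc K * ((s - r) ^ α * (t - s) ^ β) = (K * (s - r) ^ α) * (t - s) ^ β := by ring
        _ ≤ (K * (s - r) ^ α) * ((x / 2) ^ β + x ^ β) :=
            mul_le_mul_of_nonneg_left h1 (mul_nonneg hK (Real.rpow_nonneg hsr _))
        _ = c₁ * (s - r) ^ α := by rw [hc₁]; ring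
  have e2 : ∫⁻ s in Set.Ioc m t, ENNReal.ofReal (K * ((s - r) ^ α * (t - s) ^ β)) ≤
      ENNReal.ofReal (c₂ * ((x / 2) ^ (β + 1) / (β + 1))) := by
    have mono := setLIntegral_mono (s := Set.Ioc m t)
      (μ := volume) (f := fun s => ENNReal.ofReal (K * ((s - r) ^ α * (t - s) ^ β)))
      (g := fun s => ENNReal.ofReal (c₂ * (t - s) ^ β)) (by fun_prop) ?_
    · rw [lint_right m t c₂ β hm2 hβ hc₂0, htm] at mono
      exact mono
    · intro s hs
      apply ENNReal.ofReal_le_ofReal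
      have hts : 0 ≤ t - s := by linarith [hs.2]
      have h1 : (s - r) ^ α ≤ (x / 2) ^ α + x ^ α := by
        rcases le_or_gt 0 α with hα0 | hα0
        · have h := Real.rpow_le_rpow (by linarith [hs.1, hm1] : (0:ℝ) ≤ s - r)
            (by rw [hxd]; linarith [hs.2] : s - r ≤ x) hα0
          have h2 : (0:ℝ) ≤ (x / 2) ^ α := Real.rpow_nonneg (by linarith) _
          linarith
        · have h := Real.rpow_le_rpow_of_nonpos (by linarith : (0:ℝ) < x / 2)
            (by linarith [hs.1, hmr] : x / 2 ≤ s - r) hα0.le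
          have h2 : (0:ℝ) ≤ x ^ α := Real.rpow_nonneg hx.le _
          linarith
      calc K * ((s - r) ^ α * (t - s) ^ β) = (K * (t - s) ^ β) * (s - r) ^ α := by ring
        _ ≤ (K * (t - s) ^ β) * ((x / 2) ^ α + x ^ α) :=
            mul_le_mul_of_nonneg_left h1 (mul_nonneg hK (Real.rpow_nonneg hts _))
        _ = c₂ * (t - s) ^ β := by rw [hc₂]; ring
  refine (add_le_add e1 e2).trans ?_
  rw [← ENNReal.ofReal_add
    (mul_nonneg hc₁0 (div_nonneg (Real.rpow_nonneg (by linarith) _) (by linarith)))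
    (mul_nonneg hc₂0 (div_nonneg (Real.rpow_nonneg (by linarith) _) (by linarith)))]
  apply ENNReal.ofReal_le_ofReal
  apply le_of_eq
  have div2 : ∀ γ' : ℝ, (x / 2) ^ γ' = x ^ γ' * 2 ^ (-γ') := by
    intro γ'
    rw [Real.div_rpow hx.le (by norm_num), Real.rpow_neg (by norm_num), div_eq_mul_inv]
  have add1 : x ^ β * x ^ (α + 1) = x ^ (α + β + 1) := by
    rw [← Real.rpow_add hx]; ring_nf
  have add2 : x ^ α * x ^ (β + 1) = x ^ (α + β + 1) := by
    rw [← Real.rpow_add hx]; ring_nf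
  rw [hc₁, hc₂]
  simp only [div2]
  linear_combination (K * ((2:ℝ) ^ (-β) + 1) * (2:ℝ) ^ (-(α+1)) / (α+1)) * add1 +
    (K * ((2:ℝ) ^ (-α) + 1) * (2:ℝ) ^ (-(β+1)) / (β+1)) * add2

lemma KH_incr (H : ℝ) (hH0 : 0 < H) :
    ∃ c > 0, ∀ r s t : ℝ, 0 < r → r < s → s ≤ t →
      |KH H t r - KH H s r| ≤
        c * (r ^ ((1 : ℝ) / 2 - H) * ∫ u in s..t, u ^ (H - 1 / 2) * (u - r) ^ (H - 3 / 2)) := by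
  rcases lt_trichotomy H (1 / 2) with hlt | heq | hgt
  · -- H < 1/2
    set c₀ := Real.sqrt (2 * H / ((1 - 2 * H) * betaFn (1 - 2 * H) (H + 1 / 2))) with hc₀d
    have hc₀ : 0 ≤ c₀ := Real.sqrt_nonneg _
    refine ⟨c₀ * (1 / 2 - H) + 1, by nlinarith, ?_⟩
    intro r s t hr hrs hst
    have hs0 : 0 < s := hr.trans hrs
    have ht0 : 0 < t := lt_of_lt_of_le hs0 hst
    have hrt : r < t := hrs.trans_le hst
    have hnot : ¬(1 / 2 < H) := by linarith
    have hne : H ≠ 1 / 2 := by linarith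
    have huIcc : Set.uIcc s t = Set.Icc s t := Set.uIcc_of_le hst
    have huIccrt : Set.uIcc r t = Set.Icc r t := Set.uIcc_of_le hrt.le
    -- integrability of f₂ u = u^(H-3/2) * (u-r)^(H-1/2) on r..t
    have hf₂ : IntervalIntegrable (fun u : ℝ => u ^ (H - 3 / 2) * (u - r) ^ (H - 1 / 2))
        volume r t := by
      have h0 : IntervalIntegrable (fun x : ℝ => x ^ (H - 1 / 2)) volume (r - r) (t - r) :=
        intervalIntegral.intervalIntegrable_rpow' (by linarith)
      have h1 := h0.comp_sub_right r
      simp only [sub_add_cancel] at h1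
      refine h1.continuousOn_mul ?_
      rw [huIccrt]
      exact continuousOn_id.rpow_const fun x hx => Or.inl (by nlinarith [hx.1] : x ≠ 0)
    have hf₂rs : IntervalIntegrable (fun u : ℝ => u ^ (H - 3 / 2) * (u - r) ^ (H - 1 / 2))
        volume r s := hf₂.mono_set (by
          rw [Set.uIcc_of_le hrs.le, huIccrt]
          exact Set.Icc_subset_Icc le_rfl hst)
    have hf₂st : IntervalIntegrable (fun u : ℝ => u ^ (H - 3 / 2) * (u - r) ^ (H - 1 / 2))
        volume s t := hf₂.mono_set (by
          rw [huIcc, huIccrt]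
          exact Set.Icc_subset_Icc hrs.le le_rfl)
    have hadd := intervalIntegral.integral_add_adjacent_intervals hf₂rs hf₂st
    -- FTC for h u = u^(H-1/2) * (u-r)^(H-1/2)
    have hderiv : ∀ u ∈ Set.uIcc s t,
        HasDerivAt (fun y : ℝ => y ^ (H - 1 / 2) * (y - r) ^ (H - 1 / 2))
          ((H - 1 / 2) * u ^ (H - 3 / 2) * (u - r) ^ (H - 1 / 2) +
            u ^ (H - 1 / 2) * ((H - 1 / 2) * (u - r) ^ (H - 3 / 2))) u := by
      intro u hu
      rw [huIcc] at hu
      have hu0 : (0:ℝ) < u := lt_of_lt_of_le hs0 hu.1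
      have hur : (0:ℝ) < u - r := by linarith [hu.1]
      have he : H - 1 / 2 - 1 = H - 3 / 2 := by ring
      have d1 : HasDerivAt (fun y : ℝ => y ^ (H - 1 / 2))
          ((H - 1 / 2) * u ^ (H - 3 / 2)) u := by
        have := Real.hasDerivAt_rpow_const (x := u) (p := H - 1 / 2) (Or.inl hu0.ne')
        rwa [he] at this
      have d2 : HasDerivAt (fun y : ℝ => (y - r) ^ (H - 1 / 2))
          ((H - 1 / 2) * (u - r) ^ (H - 3 / 2)) u := by
        have h0 : HasDerivAt (fun y : ℝ => y - r) 1 u := (hasDerivAt_id u).sub_const r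
        have h1 := (Real.hasDerivAt_rpow_const (x := u - r) (p := H - 1 / 2)
          (Or.inl hur.ne')).comp u h0
        have h2 : ((fun x : ℝ => x ^ (H - 1 / 2)) ∘ fun y : ℝ => y - r) =
            fun y : ℝ => (y - r) ^ (H - 1 / 2) := rfl
        rw [h2, mul_one, he] at h1
        exact h1
      exact d1.mul d2
    have hcontst : ∀ (q : ℝ), ContinuousOn (fun u : ℝ => u ^ q) (Set.Icc s t) :=
      fun q => continuousOn_id.rpow_const fun x hx => Or.inl (by nlinarith [hx.1] : x ≠ 0)
    have hcontst2 : ∀ (q : ℝ), ContinuousOn (fun u : ℝ => (u - r) ^ q) (Set.Icc s t) :=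
      fun q => (continuousOn_id.sub continuousOn_const).rpow_const
        fun x hx => Or.inl (by nlinarith [hx.1] : x - r ≠ 0)
    have hA : IntervalIntegrable
        (fun u : ℝ => (H - 1 / 2) * u ^ (H - 3 / 2) * (u - r) ^ (H - 1 / 2)) volume s t := by
      apply ContinuousOn.intervalIntegrable
      rw [huIcc]
      exact ((continuousOn_const.mul (hcontst _)).mul (hcontst2 _))
    have hB : IntervalIntegrable
        (fun u : ℝ => u ^ (H - 1 / 2) * ((H - 1 / 2) * (u - r) ^ (H - 3 / 2))) volume s t := by
      apply ContinuousOn.intervalIntegrable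
      rw [huIcc]
      exact ((hcontst _).mul (continuousOn_const.mul (hcontst2 _)))
    have hftc := intervalIntegral.integral_eq_sub_of_hasDerivAt hderiv (hA.add hB)
    rw [intervalIntegral.integral_add hA hB] at hftc
    -- rewrite the two pieces
    have hApiece : ∫ u in s..t, (H - 1 / 2) * u ^ (H - 3 / 2) * (u - r) ^ (H - 1 / 2) =
        (H - 1 / 2) * ∫ u in s..t, u ^ (H - 3 / 2) * (u - r) ^ (H - 1 / 2) := by
      rw [← intervalIntegral.integral_const_mul]
      exact intervalIntegral.integral_congr fun u _ => by ring
    have hBpiece : ∫ u in s..t, u ^ (H - 1 / 2) * ((H - 1 / 2) * (u - r) ^ (H - 3 / 2)) =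
        (H - 1 / 2) * ∫ u in s..t, u ^ (H - 1 / 2) * (u - r) ^ (H - 3 / 2) := by
      rw [← intervalIntegral.integral_const_mul]
      exact intervalIntegral.integral_congr fun u _ => by ring
    rw [hApiece, hBpiece] at hftc
    -- div rpow identities
    have hdivt : (t / r) ^ (H - 1 / 2) = t ^ (H - 1 / 2) * r ^ ((1:ℝ) / 2 - H) := by
      rw [Real.div_rpow ht0.le hr.le, show (1:ℝ) / 2 - H = -(H - 1 / 2) by ring,
        Real.rpow_neg hr.le, div_eq_mul_inv]
    have hdivs : (s / r) ^ (H - 1 / 2) = s ^ (H - 1 / 2) * r ^ ((1:ℝ) / 2 - H) := by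
      rw [Real.div_rpow hs0.le hr.le, show (1:ℝ) / 2 - H = -(H - 1 / 2) by ring,
        Real.rpow_neg hr.le, div_eq_mul_inv]
    have key : KH H t r - KH H s r =
        c₀ * ((H - 1 / 2) * (r ^ ((1:ℝ) / 2 - H) *
          ∫ u in s..t, u ^ (H - 1 / 2) * (u - r) ^ (H - 3 / 2))) := by
      simp only [KH, if_neg hnot, if_neg hne, ← hc₀d]
      rw [hdivt, hdivs]
      linear_combination (-(c₀ * r ^ ((1:ℝ)/2 - H))) * hftc +
        (c₀ * (H - 1/2) * r ^ ((1:ℝ)/2 - H)) * hadd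
    -- conclude
    have hJ : 0 ≤ ∫ u in s..t, u ^ (H - 1 / 2) * (u - r) ^ (H - 3 / 2) :=
      intervalIntegral.integral_nonneg hst fun u hu =>
        mul_nonneg (Real.rpow_nonneg (by linarith [hu.1] : (0:ℝ) ≤ u) _)
          (Real.rpow_nonneg (by linarith [hu.1] : (0:ℝ) ≤ u - r) _)
    have hre : (0:ℝ) ≤ r ^ ((1:ℝ) / 2 - H) := Real.rpow_nonneg hr.le _
    rw [key, abs_of_nonpos (by nlinarith [mul_nonneg (mul_nonneg hc₀ hre) hJ] :
      c₀ * ((H - 1 / 2) * (r ^ ((1:ℝ) / 2 - H) *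
      ∫ u in s..t, u ^ (H - 1 / 2) * (u - r) ^ (H - 3 / 2))) ≤ 0)]
    nlinarith [mul_nonneg hre hJ]
  · -- H = 1/2
    refine ⟨1, one_pos, ?_⟩
    intro r s t hr hrs hst
    have hnot : ¬(1 / 2 < H) := by rw [heq]; exact lt_irrefl _
    simp only [KH, if_neg hnot, if_pos heq, sub_self, abs_zero, one_mul]
    exact mul_nonneg (Real.rpow_nonneg hr.le _)
      (intervalIntegral.integral_nonneg hst fun u hu =>
        mul_nonneg (Real.rpow_nonneg (by linarith [hu.1, hr.trans hrs] : (0:ℝ) ≤ u) _)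
          (Real.rpow_nonneg (by linarith [hu.1] : (0:ℝ) ≤ u - r) _))
  · -- 1/2 < H
    set c₀ := Real.sqrt (H * (2 * H - 1) / betaFn (2 - 2 * H) (H - 1 / 2)) with hc₀d
    have hc₀ : 0 ≤ c₀ := Real.sqrt_nonneg _
    refine ⟨c₀ + 1, by linarith, ?_⟩
    intro r s t hr hrs hst
    have hs0 : 0 < s := hr.trans hrs
    have hrt : r < t := hrs.trans_le hst
    have huIccrt : Set.uIcc r t = Set.Icc r t := Set.uIcc_of_le hrt.le
    have hg : IntervalIntegrable (fun u : ℝ => (u - r) ^ (H - 3 / 2) * u ^ (H - 1 / 2))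
        volume r t := by
      have h0 : IntervalIntegrable (fun x : ℝ => x ^ (H - 3 / 2)) volume (r - r) (t - r) :=
        intervalIntegral.intervalIntegrable_rpow' (by linarith)
      have h1 := h0.comp_sub_right r
      simp only [sub_add_cancel] at h1
      refine h1.mul_continuousOn ?_
      rw [huIccrt]
      exact continuousOn_id.rpow_const fun x hx => Or.inl (by nlinarith [hx.1] : x ≠ 0)
    have hgrs : IntervalIntegrable (fun u : ℝ => (u - r) ^ (H - 3 / 2) * u ^ (H - 1 / 2))
        volume r s := hg.mono_set (by
          rw [Set.uIcc_of_le hrs.le, huIccrt]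
          exact Set.Icc_subset_Icc le_rfl hst)
    have hgst : IntervalIntegrable (fun u : ℝ => (u - r) ^ (H - 3 / 2) * u ^ (H - 1 / 2))
        volume s t := hg.mono_set (by
          rw [Set.uIcc_of_le hst, huIccrt]
          exact Set.Icc_subset_Icc hrs.le le_rfl)
    have hadd := intervalIntegral.integral_add_adjacent_intervals hgrs hgst
    have key : KH H t r - KH H s r =
        c₀ * (r ^ ((1:ℝ) / 2 - H) *
          ∫ u in s..t, (u - r) ^ (H - 3 / 2) * u ^ (H - 1 / 2)) := by
      simp only [KH, if_pos hgt, ← hc₀d]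
      linear_combination (-(c₀ * r ^ ((1:ℝ)/2 - H))) * hadd
    have hcomm : (∫ u in s..t, (u - r) ^ (H - 3 / 2) * u ^ (H - 1 / 2)) =
        ∫ u in s..t, u ^ (H - 1 / 2) * (u - r) ^ (H - 3 / 2) :=
      intervalIntegral.integral_congr fun u _ => by ring
    have hJ : 0 ≤ ∫ u in s..t, u ^ (H - 1 / 2) * (u - r) ^ (H - 3 / 2) :=
      intervalIntegral.integral_nonneg hst fun u hu =>
        mul_nonneg (Real.rpow_nonneg (by linarith [hu.1] : (0:ℝ) ≤ u) _)
          (Real.rpow_nonneg (by linarith [hu.1] : (0:ℝ) ≤ u - r) _)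
    have hre : (0:ℝ) ≤ r ^ ((1:ℝ) / 2 - H) := Real.rpow_nonneg hr.le _
    rw [key, hcomm, abs_of_nonneg (by positivity)]
    nlinarith [mul_nonneg hre hJ]

set_option maxHeartbeats 2000000 in
/-- If `H < min(2/(d+1), 3/(2d))` then
`∫_r^T ∫_r^t (t−s)^{−Hd−H} |K_H(t,r) − K_H(s,r)| ds dt ≤ C (r^{1/2−H} ∨ 1)`. -/
theorem KH_increment_integral_bound (H : ℝ) (d : ℕ) (hd : 1 ≤ d) (hH0 : 0 < H)
    (hH : H < min (2 / ((d : ℝ) + 1)) (3 / (2 * (d : ℝ)))) (T : ℝ) (hT : 0 < T) :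
    ∃ C > 0, ∀ r ∈ Set.Ioc (0 : ℝ) T,
      (∫⁻ t in Set.Ioc r T, ∫⁻ s in Set.Ioc r t,
          ENNReal.ofReal ((t - s) ^ (-(H * d) - H) * |KH H t r - KH H s r|)) ≤
        ENNReal.ofReal (C * max (r ^ ((1 : ℝ) / 2 - H)) 1) := by
  have hd1 : (1:ℝ) ≤ (d:ℝ) := by exact_mod_cast hd
  have h2d : H < 2 / ((d:ℝ) + 1) := lt_of_lt_of_le hH (min_le_left _ _)
  have h3d : H < 3 / (2 * (d:ℝ)) := lt_of_lt_of_le hH (min_le_right _ _)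
  have hγ2 : H * (d:ℝ) + H < 2 := by
    have := (lt_div_iff₀ (by linarith : (0:ℝ) < (d:ℝ) + 1)).mp h2d
    nlinarith
  have hHd : H * (d:ℝ) < 3 / 2 := by
    have := (lt_div_iff₀ (by linarith : (0:ℝ) < 2 * (d:ℝ))).mp h3d
    nlinarith
  have hH1 : H < 1 := by
    have h1 : 2 / ((d:ℝ) + 1) ≤ 1 := by
      rw [div_le_one (by linarith)]; linarith
    linarith
  obtain ⟨c, hc0, hcb⟩ := KH_incr H hH0
  set b : ℝ := (max (max (H - 1 / 2) (H * (d:ℝ) + H - 1)) 0 + min 1 (H + 1 / 2)) / 2 with hbd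
  have hlohi : max (max (H - 1 / 2) (H * (d:ℝ) + H - 1)) 0 < min 1 (H + 1 / 2) := by
    refine max_lt (max_lt (lt_min_iff.mpr ⟨by linarith, by linarith⟩)
      (lt_min_iff.mpr ⟨by linarith, by linarith⟩)) (lt_min_iff.mpr ⟨by linarith, by linarith⟩)
  have hblo : max (max (H - 1 / 2) (H * (d:ℝ) + H - 1)) 0 < b := by rw [hbd]; linarith
  have hbhi : b < min 1 (H + 1 / 2) := by rw [hbd]; linarith
  have hb0 : 0 < b := lt_of_le_of_lt (le_max_right _ 0) hblo
  have hb1 : b ≤ 1 := (hbhi.trans_le (min_le_left _ _)).le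
  have hbp : H - 1 / 2 ≤ b := (((le_max_left _ _).trans (le_max_left _ _)).trans hblo.le)
  have hbγ : H * (d:ℝ) + H - 1 < b := lt_of_le_of_lt ((le_max_right _ _).trans (le_max_left _ _)) hblo
  have hbH : b < H + 1 / 2 := hbhi.trans_le (min_le_right _ _)
  set α : ℝ := H - 1 / 2 - b with hαd
  set β : ℝ := b - (H * (d:ℝ) + H) with hβd
  have hα : -1 < α := by rw [hαd]; linarith
  have hβ : -1 < β := by rw [hβd]; linarith
  have hσ1 : 0 < α + β + 1 + 1 := by rw [hαd, hβd]; linarith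
  have hσ : -1 < α + β + 1 := by rw [hαd, hβd]; linarith
  set MT : ℝ := max (T ^ (H - 1 / 2)) 1 with hMTd
  have hMT1 : (1:ℝ) ≤ MT := le_max_right _ _
  have hMT : 0 < MT := lt_of_lt_of_le one_pos hMT1
  set Cab : ℝ := ((2:ℝ) ^ (-β) + 1) * (2:ℝ) ^ (-(α + 1)) / (α + 1) +
      ((2:ℝ) ^ (-α) + 1) * (2:ℝ) ^ (-(β + 1)) / (β + 1) with hCabd
  have hCab : 0 < Cab := by
    rw [hCabd]
    have p1 : (0:ℝ) < (2:ℝ) ^ (-β) + 1 := by positivity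
    have p2 : (0:ℝ) < (2:ℝ) ^ (-(α + 1)) := by positivity
    have p3 : (0:ℝ) < (2:ℝ) ^ (-α) + 1 := by positivity
    have p4 : (0:ℝ) < (2:ℝ) ^ (-(β + 1)) := by positivity
    have := div_pos (mul_pos p1 p2) (by linarith : (0:ℝ) < α + 1)
    have := div_pos (mul_pos p3 p4) (by linarith : (0:ℝ) < β + 1)
    linarith
  have hTσ : (0:ℝ) < T ^ (α + β + 1 + 1) := Real.rpow_pos_of_pos hT _
  refine ⟨c / b * MT * Cab * (T ^ (α + β + 1 + 1) / (α + β + 1 + 1)), ?_, ?_⟩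
  · have h1 : 0 < c / b := div_pos hc0 hb0
    have h2 : 0 < T ^ (α + β + 1 + 1) / (α + β + 1 + 1) := div_pos hTσ hσ1
    positivity
  intro r hr
  obtain ⟨hr0, hrT⟩ := hr
  set Mr : ℝ := max (r ^ ((1:ℝ) / 2 - H)) 1 with hMrd
  have hMr1 : (1:ℝ) ≤ Mr := le_max_right _ _
  have hMr : 0 < Mr := lt_of_lt_of_le one_pos hMr1
  -- master pointwise bound
  have master : ∀ t ∈ Set.Ioc r T, ∀ s ∈ Set.Ioc r t,
      (t - s) ^ (-(H * (d:ℝ)) - H) * |KH H t r - KH H s r| ≤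
        c / b * Mr * MT * ((s - r) ^ α * (t - s) ^ β) := by
    intro t ht s hs
    obtain ⟨hrt, htT⟩ := ht
    obtain ⟨hrs, hst⟩ := hs
    have hsr : 0 < s - r := by linarith
    rcases hst.eq_or_lt with heq | hst'
    · subst heq
      simp only [sub_self, abs_zero, mul_zero]
      have h1 : 0 ≤ c / b * Mr * MT :=
        mul_nonneg (mul_nonneg (div_pos hc0 hb0).le hMr.le) hMT.le
      exact mul_nonneg h1 (mul_nonneg (Real.rpow_nonneg hsr.le _)
        (Real.rpow_nonneg le_rfl _))
    have hts : 0 < t - s := by linarith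
    have h1 := hcb r s t hr0 hrs hst
    -- pointwise bound on [s,t]
    have hupoint : ∀ u ∈ Set.Icc s t, r ^ ((1:ℝ) / 2 - H) * u ^ (H - 1 / 2) ≤ Mr * MT := by
      intro u hu
      have hu0 : 0 < u := lt_of_lt_of_le (hr0.trans hrs) hu.1
      rcases le_or_gt 0 (H - 1 / 2) with hp0 | hp0
      · have h2 : u ^ (H - 1 / 2) ≤ T ^ (H - 1 / 2) :=
          Real.rpow_le_rpow hu0.le (by linarith [hu.2]) hp0
        exact mul_le_mul (le_max_left _ _) (h2.trans (le_max_left _ _))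
          (Real.rpow_nonneg hu0.le _) hMr.le
      · have h2 : u ^ (H - 1 / 2) ≤ r ^ (H - 1 / 2) :=
          Real.rpow_le_rpow_of_nonpos hr0 (by linarith [hu.1]) hp0.le
        have h5 : r ^ ((1:ℝ) / 2 - H) * r ^ (H - 1 / 2) = 1 := by
          rw [← Real.rpow_add hr0]; norm_num
        calc r ^ ((1:ℝ) / 2 - H) * u ^ (H - 1 / 2)
            ≤ r ^ ((1:ℝ) / 2 - H) * r ^ (H - 1 / 2) :=
              mul_le_mul_of_nonneg_left h2 (Real.rpow_nonneg hr0.le _)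
          _ = 1 := h5
          _ ≤ Mr * MT := by
              have := mul_le_mul hMr1 hMT1 (by norm_num) (by linarith)
              simpa using this
    have hpoint : ∀ u ∈ Set.Icc s t,
        r ^ ((1:ℝ) / 2 - H) * (u ^ (H - 1 / 2) * (u - r) ^ (H - 3 / 2)) ≤
          Mr * MT * (s - r) ^ α * (u - r) ^ (b - 1) := by
      intro u hu
      have hur : 0 < u - r := by linarith [hu.1]
      have e1 : (u - r) ^ (H - 3 / 2) = (u - r) ^ α * (u - r) ^ (b - 1) := by
        rw [← Real.rpow_add hur, hαd]; ring_nf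
      have e2 : (u - r) ^ α ≤ (s - r) ^ α :=
        Real.rpow_le_rpow_of_nonpos hsr (by linarith [hu.1]) (by rw [hαd]; linarith)
      calc r ^ ((1:ℝ) / 2 - H) * (u ^ (H - 1 / 2) * (u - r) ^ (H - 3 / 2))
          = (r ^ ((1:ℝ) / 2 - H) * u ^ (H - 1 / 2)) * ((u - r) ^ α * (u - r) ^ (b - 1)) := by
            rw [e1]; ring
        _ ≤ (Mr * MT) * ((s - r) ^ α * (u - r) ^ (b - 1)) :=
            mul_le_mul (hupoint u hu)
              (mul_le_mul_of_nonneg_right e2 (Real.rpow_nonneg hur.le _))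
              (mul_nonneg (Real.rpow_nonneg hur.le _) (Real.rpow_nonneg hur.le _))
              (mul_nonneg hMr.le hMT.le)
        _ = Mr * MT * (s - r) ^ α * (u - r) ^ (b - 1) := by ring
    have hcont1 : IntervalIntegrable
        (fun u : ℝ => r ^ ((1:ℝ) / 2 - H) * (u ^ (H - 1 / 2) * (u - r) ^ (H - 3 / 2)))
        volume s t := by
      apply ContinuousOn.intervalIntegrable
      rw [Set.uIcc_of_le hst]
      refine continuousOn_const.mul (ContinuousOn.mul ?_ ?_)
      · exact continuousOn_id.rpow_const fun x hx =>
          Or.inl (by nlinarith [hx.1] : x ≠ 0)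
      · exact (continuousOn_id.sub continuousOn_const).rpow_const fun x hx =>
          Or.inl (by nlinarith [hx.1] : x - r ≠ 0)
    have hcont2 : IntervalIntegrable
        (fun u : ℝ => Mr * MT * (s - r) ^ α * (u - r) ^ (b - 1)) volume s t := by
      apply ContinuousOn.intervalIntegrable
      rw [Set.uIcc_of_le hst]
      exact continuousOn_const.mul ((continuousOn_id.sub continuousOn_const).rpow_const
        fun x hx => Or.inl (by nlinarith [hx.1] : x - r ≠ 0))
    have hmono := intervalIntegral.integral_mono_on hst hcont1 hcont2 hpoint
    rw [intervalIntegral.integral_const_mul, intervalIntegral.integral_const_mul] at hmono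
    have hshift : ∫ u in s..t, (u - r) ^ (b - 1) ≤ (t - s) ^ b / b := by
      rw [intervalIntegral.integral_comp_sub_right (fun w => w ^ (b - 1)) r]
      have := shift_int (s - r) (t - r) b hsr (by linarith) hb0 hb1
      calc ∫ w in (s - r)..(t - r), w ^ (b - 1) ≤ (t - r - (s - r)) ^ b / b := this
        _ = (t - s) ^ b / b := by rw [show t - r - (s - r) = t - s by ring]
    have h6 : r ^ ((1:ℝ) / 2 - H) *
        (∫ u in s..t, u ^ (H - 1 / 2) * (u - r) ^ (H - 3 / 2)) ≤
          Mr * MT * (s - r) ^ α * ((t - s) ^ b / b) :=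
      hmono.trans (mul_le_mul_of_nonneg_left hshift
        (mul_nonneg (mul_nonneg hMr.le hMT.le) (Real.rpow_nonneg hsr.le _)))
    have h7 : |KH H t r - KH H s r| ≤
        c * (Mr * MT * (s - r) ^ α * ((t - s) ^ b / b)) :=
      h1.trans (mul_le_mul_of_nonneg_left h6 hc0.le)
    have h8 := mul_le_mul_of_nonneg_left h7
      (Real.rpow_nonneg hts.le (-(H * (d:ℝ)) - H))
    refine h8.trans_eq ?_
    have hpow : (t - s) ^ (-(H * (d:ℝ)) - H) * (t - s) ^ b = (t - s) ^ β := by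
      rw [← Real.rpow_add hts, hβd]; ring_nf
    rw [← hpow]
    field_simp
  -- assemble
  have inner : ∀ t ∈ Set.Ioc r T,
      (∫⁻ s in Set.Ioc r t,
        ENNReal.ofReal ((t - s) ^ (-(H * d) - H) * |KH H t r - KH H s r|)) ≤
      ENNReal.ofReal (c / b * Mr * MT * (Cab * (t - r) ^ (α + β + 1))) := by
    intro t ht
    have step := setLIntegral_mono (μ := volume) (s := Set.Ioc r t)
      (f := fun s => ENNReal.ofReal ((t - s) ^ (-(H * d) - H) * |KH H t r - KH H s r|))
      (g := fun s => ENNReal.ofReal (c / b * Mr * MT * ((s - r) ^ α * (t - s) ^ β)))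
      (by fun_prop) (fun s hs => ENNReal.ofReal_le_ofReal (master t ht s hs))
    refine step.trans ?_
    have h2 := lint_two_pow r t (c / b * Mr * MT) α β ht.1 hα hβ
      (mul_nonneg (mul_nonneg (div_pos hc0 hb0).le hMr.le) hMT.le)
    refine h2.trans_eq ?_
    congr 1
  calc ∫⁻ t in Set.Ioc r T, ∫⁻ s in Set.Ioc r t,
        ENNReal.ofReal ((t - s) ^ (-(H * d) - H) * |KH H t r - KH H s r|)
      ≤ ∫⁻ t in Set.Ioc r T,
          ENNReal.ofReal (c / b * Mr * MT * Cab * (t - r) ^ (α + β + 1)) := by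
        refine setLIntegral_mono (μ := volume) (by fun_prop) fun t ht => ?_
        refine (inner t ht).trans_eq ?_
        congr 1
        ring
    _ = ENNReal.ofReal (c / b * Mr * MT * Cab *
          ((T - r) ^ (α + β + 1 + 1) / (α + β + 1 + 1))) :=
        lint_left r T _ (α + β + 1) hrT hσ
          (mul_nonneg (mul_nonneg (mul_nonneg (div_pos hc0 hb0).le hMr.le) hMT.le) hCab.le)
    _ ≤ ENNReal.ofReal (c / b * MT * Cab * (T ^ (α + β + 1 + 1) / (α + β + 1 + 1)) * Mr) := by
        apply ENNReal.ofReal_le_ofReal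
        have h9 : (T - r) ^ (α + β + 1 + 1) ≤ T ^ (α + β + 1 + 1) :=
          Real.rpow_le_rpow (by linarith) (by linarith) hσ1.le
        have hcoef : 0 ≤ c / b * Mr * MT * Cab / (α + β + 1 + 1) :=
          div_nonneg (mul_nonneg (mul_nonneg (mul_nonneg (div_pos hc0 hb0).le hMr.le)
            hMT.le) hCab.le) hσ1.le
        calc c / b * Mr * MT * Cab * ((T - r) ^ (α + β + 1 + 1) / (α + β + 1 + 1))
            = (c / b * Mr * MT * Cab / (α + β + 1 + 1)) * (T - r) ^ (α + β + 1 + 1) := by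
              ring
          _ ≤ (c / b * Mr * MT * Cab / (α + β + 1 + 1)) * T ^ (α + β + 1 + 1) :=
              mul_le_mul_of_nonneg_left h9 hcoef
          _ = c / b * MT * Cab * (T ^ (α + β + 1 + 1) / (α + β + 1 + 1)) * Mr := by ring
end
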